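/- arXiv:1702.07513 — 4 statements merged into one kernel-verified Lean document; each statement's English description precedes it below -/
import Mathlib

section
/- Let F : ℝⁿ \ {0} → ℝⁿ be the radial map F(x) = φ(|x|)·x/|x| with φ differentiable, φ' > 0, and x·φ'(x) > φ(x) for all x > 0. Then for every x ≠ 0 and every k-dimensional linear subspace V ⊆ ℝⁿ (1 ≤ k ≤ n), the absolute value of the determinant of the composition of DF(x) restricted to V with the orthogonal projection onto DF(x)(V) is at most φ'(|x|)·(φ(|x|)/|x|)^{k−1}. -/
open scoped RealInnerProductSpace

theorem radial_deriv (n : ℕ) (φ : ℝ → ℝ) (x : EuclideanSpace ℝ (Fin n)) (hx : x ≠ 0)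
    (hφdiff : DifferentiableAt ℝ φ ‖x‖)
    (F : EuclideanSpace ℝ (Fin n) → EuclideanSpace ℝ (Fin n))
    (hF : ∀ x, x ≠ 0 → F x = (φ ‖x‖ / ‖x‖) • x)
    (D : EuclideanSpace ℝ (Fin n) →L[ℝ] EuclideanSpace ℝ (Fin n))
    (hD : HasFDerivAt F D x) :
    ∀ u, D u = (φ ‖x‖ / ‖x‖) • u
      + (((deriv φ ‖x‖ * ‖x‖ - φ ‖x‖)/‖x‖^3) * ⟪x, u⟫) • x := by
  have hr0 : (0:ℝ) < ‖x‖ := norm_pos_iff.mpr hx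
  have hnorm : HasFDerivAt (fun y : EuclideanSpace ℝ (Fin n) => ‖y‖) (‖x‖⁻¹ • innerSL ℝ x) x := by
    have h1 : HasFDerivAt (fun y : EuclideanSpace ℝ (Fin n) => ‖y‖^2) (2 • innerSL ℝ x) x :=
      (hasFDerivAt_id x).norm_sq
    have h2 : HasDerivAt Real.sqrt (1/(2*Real.sqrt (‖x‖^2))) (‖x‖^2) :=
      Real.hasDerivAt_sqrt (by positivity)
    have h3 := h2.comp_hasFDerivAt x h1
    have he : (fun y : EuclideanSpace ℝ (Fin n) => Real.sqrt (‖y‖^2)) = fun y => ‖y‖ := by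
      funext y; rw [Real.sqrt_sq (norm_nonneg y)]
    rw [Function.comp_def, he] at h3
    refine h3.congr_fderiv (Eq.symm ?_)
    rw [Real.sqrt_sq (norm_nonneg x)]
    ext y; simp [smul_smul]; ring
  have hq : HasDerivAt (fun t => φ t / t) ((deriv φ ‖x‖ * ‖x‖ - φ ‖x‖ * 1)/‖x‖^2) ‖x‖ :=
    (hφdiff.hasDerivAt).div (hasDerivAt_id ‖x‖) (ne_of_gt hr0)
  have hg := hq.comp_hasFDerivAt x hnorm
  have hG := hg.smul (hasFDerivAt_id x)
  have hFg : F =ᶠ[nhds x] (fun y : EuclideanSpace ℝ (Fin n) => (φ ‖y‖ / ‖y‖) • y) := by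
    filter_upwards [IsOpen.mem_nhds isOpen_compl_singleton hx] with y hy
    exact hF y hy
  have hFD := hG.congr_of_eventuallyEq hFg
  have hDeq := hD.unique hFD
  intro u
  rw [hDeq]
  simp only [ContinuousLinearMap.add_apply, ContinuousLinearMap.smul_apply,
    ContinuousLinearMap.smulRight_apply, ContinuousLinearMap.coe_id', id_eq,
    Function.comp_apply, innerSL_apply_apply, smul_smul]
  match_scalars
  · field_simp
  · field_simp
    rw [smul_eq_mul]
    field_simp


/-- For the radial map `F(x) = φ(|x|) • x/|x|` with `φ' > 0` and
`x·φ'(x) > φ(x)`, at every `x ≠ 0` and every `k`-dimensional subspace `V`, the factor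
by which the derivative `DF(x)` scales `k`-dimensional volume on `V` (equivalently, the
absolute determinant of `DF(x)|_V` followed by the orthogonal projection onto
`DF(x)(V)`, expressed here via Gram determinants of an orthonormal family spanning the
`k`-dimensional directions) is at most `φ'(|x|)·(φ(|x|)/|x|)^(k-1)`. -/
theorem stmt_2 (n k : ℕ) (hk1 : 1 ≤ k) (hkn : k ≤ n) (φ : ℝ → ℝ)
    (hφpos : ∀ r > 0, φ r > 0)
    (hφdiff : ∀ r > 0, DifferentiableAt ℝ φ r)
    (hφ' : ∀ r > 0, deriv φ r > 0)
    (hφrad : ∀ r > 0, r * deriv φ r > φ r)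
    (F : EuclideanSpace ℝ (Fin n) → EuclideanSpace ℝ (Fin n))
    (hF : ∀ x, x ≠ 0 → F x = (φ ‖x‖ / ‖x‖) • x)
    (x : EuclideanSpace ℝ (Fin n)) (hx : x ≠ 0)
    (D : EuclideanSpace ℝ (Fin n) →L[ℝ] EuclideanSpace ℝ (Fin n))
    (hD : HasFDerivAt F D x)
    (V : Submodule ℝ (EuclideanSpace ℝ (Fin n)))
    (hV : Module.finrank ℝ V = k)
    (v : Fin k → EuclideanSpace ℝ (Fin n))
    (hvV : ∀ i, v i ∈ V)
    (hvON : Orthonormal ℝ v) :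
    Real.sqrt (Matrix.det (Matrix.of fun i j => ⟪D (v i), D (v j)⟫)) ≤
      deriv φ ‖x‖ * (φ ‖x‖ / ‖x‖) ^ (k - 1) := by
  have hr0 : (0:ℝ) < ‖x‖ := norm_pos_iff.mpr hx
  have hrne : (‖x‖:ℝ) ≠ 0 := ne_of_gt hr0
  set r : ℝ := ‖x‖ with hrdef
  set a : ℝ := φ r / r with hadef
  set b : ℝ := deriv φ r with hbdef
  have ha0 : 0 < a := div_pos (hφpos r hr0) hr0
  have hab : a < b := by
    have := hφrad r hr0
    rw [hadef]
    rw [div_lt_iff₀ hr0]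
    nlinarith
  have hb0 : 0 < b := lt_trans ha0 hab
  set β : ℝ := b^2 - a^2 with hβdef
  have hβ0 : 0 < β := by nlinarith
  have hDu := radial_deriv n φ x hx (hφdiff r hr0) F hF D hD
  set t : Fin k → ℝ := fun i => ⟪x, v i⟫ / r with htdef
  -- inner product formula
  have hinner : ∀ u w : EuclideanSpace ℝ (Fin n),
      ⟪D u, D w⟫ = a^2 * ⟪u, w⟫ + β * (⟪x, u⟫/r) * (⟪x, w⟫/r) := by
    intro u w
    rw [hDu u, hDu w]
    simp only [inner_add_left, inner_add_right, real_inner_smul_left, real_inner_smul_right,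
      real_inner_self_eq_norm_sq]
    rw [real_inner_comm u x]
    rw [hβdef, hadef, hbdef]
    field_simp
    ring
  -- Gram matrix identity
  have hON : ∀ i j, ⟪v i, v j⟫ = if i = j then (1:ℝ) else 0 :=
    fun i j => orthonormal_iff_ite.mp hvON i j
  have hGram : (Matrix.of fun i j => ⟪D (v i), D (v j)⟫) =
      (a^2) • (1 + Matrix.replicateCol Unit (fun i => (β/a^2) * t i) * Matrix.replicateRow Unit t) := by
    ext i j
    simp only [Matrix.of_apply, Matrix.smul_apply, Matrix.add_apply, Matrix.mul_apply,
      Matrix.replicateCol_apply, Matrix.replicateRow_apply, Finset.univ_unique, Finset.sum_singleton,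
      Matrix.one_apply, smul_eq_mul]
    rw [hinner, hON]
    rw [htdef]
    simp only []
    by_cases h : i = j <;> simp [h] <;> field_simp <;> ring
  rw [hGram]
  rw [Matrix.det_smul, Matrix.det_one_add_replicateCol_mul_replicateRow]
  -- Bessel
  have hS1 : (∑ i, t i ^ 2) ≤ 1 := by
    have he1 : ‖(r⁻¹ • x : EuclideanSpace ℝ (Fin n))‖ = 1 := by
      rw [norm_smul]
      simp [abs_of_pos hr0, inv_mul_cancel₀ hrne]
      exact inv_mul_cancel₀ hrne
    have hb := hvON.sum_inner_products_le (s := Finset.univ) (r⁻¹ • x)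
    rw [he1] at hb
    simp only [one_pow] at hb
    refine le_trans (le_of_eq ?_) hb
    apply Finset.sum_congr rfl
    intro i _
    rw [real_inner_smul_right, real_inner_comm]
    rw [htdef]
    simp only [Real.norm_eq_abs, sq_abs]
    rw [div_eq_inv_mul]
  have hS0 : (0:ℝ) ≤ ∑ i, t i ^ 2 := Finset.sum_nonneg fun i _ => sq_nonneg _
  -- final arithmetic
  obtain ⟨m, rfl⟩ : ∃ m, k = m + 1 := ⟨k - 1, (Nat.succ_pred_eq_of_pos hk1).symm⟩
  have hdot : dotProduct t (fun i => (β/a^2) * t i) = (β/a^2) * ∑ i, t i ^ 2 := by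
    rw [dotProduct]
    rw [Finset.mul_sum]
    apply Finset.sum_congr rfl
    intro i _
    ring
  rw [hdot]
  have key : (a^2)^(m+1) * (1 + (β/a^2) * ∑ i, t i ^ 2) ≤ (b * a^m)^2 := by
    have h1 : (a^2)^(m+1) * (1 + (β/a^2) * ∑ i, t i ^ 2)
        = (a^2)^m * (a^2 + β * ∑ i, t i ^ 2) := by
      field_simp
      ring
    rw [h1]
    have h2 : a^2 + β * ∑ i, t i ^ 2 ≤ b^2 := by nlinarith
    calc (a^2)^m * (a^2 + β * ∑ i, t i ^ 2) ≤ (a^2)^m * b^2 :=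
          mul_le_mul_of_nonneg_left h2 (by positivity)
      _ = (b * a^m)^2 := by ring
  rw [Fintype.card_fin]
  calc Real.sqrt ((a^2)^(m+1) * (1 + (β/a^2) * ∑ i, t i ^ 2))
      ≤ Real.sqrt ((b * a^m)^2) := Real.sqrt_le_sqrt key
    _ = b * a^m := Real.sqrt_sq (by positivity)
    _ = b * a^(m + 1 - 1) := by norm_num
end

section
/- Let μ be a finite measure on ℝ^ℓ with log-concave density ρ supported in a convex body L ⊆ ℝ^ℓ, and suppose ρ attains its maximum at a point c ∈ L. Then for every t ∈ [0,1], μ(t·(L − c) + c) ≥ t^ℓ · μ(L). -/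
open MeasureTheory

/-- if `μ` is a finite measure on `ℝ^ℓ` with log-concave density `ρ`
supported in a convex body `L`, and `ρ` attains its maximum at `c ∈ L`, then for every
`t ∈ [0,1]`, `μ(t·(L−c)+c) ≥ t^ℓ · μ(L)`. -/
theorem stmt_7 (l : ℕ) (ρ : EuclideanSpace ℝ (Fin l) → ℝ)
    (μ : Measure (EuclideanSpace ℝ (Fin l)))
    (hμ : μ = volume.withDensity (fun x => ENNReal.ofReal (ρ x)))
    (hfin : IsFiniteMeasure μ)
    (L : Set (EuclideanSpace ℝ (Fin l)))
    (hLconv : Convex ℝ L) (hLcomp : IsCompact L) (hLint : (interior L).Nonempty)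
    (hρnonneg : ∀ x, 0 ≤ ρ x)
    (hρsupp : ∀ x, x ∉ L → ρ x = 0)
    (hρlogconc : ∀ x ∈ L, ∀ y ∈ L, ∀ a b : ℝ, 0 ≤ a → 0 ≤ b → a + b = 1 →
      ρ x ^ a * ρ y ^ b ≤ ρ (a • x + b • y))
    (c : EuclideanSpace ℝ (Fin l)) (hc : c ∈ L)
    (hmax : ∀ x, ρ x ≤ ρ c) :
    ∀ t ∈ Set.Icc (0 : ℝ) 1,
      ENNReal.ofReal (t ^ l) * μ L ≤ μ ((fun y => c + t • (y - c)) '' L) := by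
  intro t ht
  set T : EuclideanSpace ℝ (Fin l) → EuclideanSpace ℝ (Fin l) :=
    fun y => c + t • (y - c) with hT
  -- key pointwise inequality: for y ∈ L, ρ y ≤ ρ (T y)
  have key : ∀ y ∈ L, ρ y ≤ ρ (T y) := by
    intro y hy
    have habc : (1 - t) + t = 1 := by ring
    have h1 := hρlogconc c hc y hy (1 - t) t (by linarith [ht.2]) ht.1 habc
    have heq : (1 - t) • c + t • y = T y := by
      simp only [hT]
      module
    rw [heq] at h1
    have h2 : ρ y ^ (1 - t) * ρ y ^ t ≤ ρ c ^ (1 - t) * ρ y ^ t := by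
      apply mul_le_mul_of_nonneg_right _ (Real.rpow_nonneg (hρnonneg y) t)
      exact Real.rpow_le_rpow (hρnonneg y) (hmax y) (by linarith [ht.2])
    have h3 : ρ y ^ (1 - t) * ρ y ^ t = ρ y := by
      rw [← Real.rpow_add' (hρnonneg y) (by rw [habc]; norm_num), habc, Real.rpow_one]
    linarith
  rcases eq_or_lt_of_le ht.1 with htz | htpos
  · -- t = 0
    subst htz
    rcases Nat.eq_zero_or_pos l with hl | hl
    · -- l = 0 : the space is a subsingleton
      subst hl
      have hsub : Subsingleton (EuclideanSpace ℝ (Fin 0)) := by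
        constructor
        intro a b
        ext i
        exact absurd i.2 (by omega)
      have hLsub : L ⊆ (fun y => c + (0:ℝ) • (y - c)) '' L := by
        intro x hx
        exact ⟨c, hc, hsub.elim _ _⟩
      calc ENNReal.ofReal ((0:ℝ) ^ 0) * μ L = μ L := by norm_num
        _ ≤ μ ((fun y => c + (0:ℝ) • (y - c)) '' L) := measure_mono hLsub
    · simp [zero_pow hl.ne']
  · -- 0 < t
    have htne : t ≠ 0 := htpos.ne'
    have htl : (0:ℝ) < t ^ l := pow_pos htpos l
    -- T as a measurable equiv
    let e : EuclideanSpace ℝ (Fin l) ≃ᵐ EuclideanSpace ℝ (Fin l) :=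
      ((Homeomorph.addRight (-c)).trans
        ((Homeomorph.smulOfNeZero t htne).trans (Homeomorph.addLeft c))).toMeasurableEquiv
    have he : ∀ y, e y = T y := by
      intro y
      simp [e, Homeomorph.trans, hT, sub_eq_add_neg]
    have hTinj : Function.Injective T := by
      intro a b hab
      have : e a = e b := by rw [he, he, hab]
      exact e.injective this
    have hTcont : Continuous T := by
      simp only [hT]; fun_prop
    have hTLmeas : MeasurableSet (T '' L) := (hLcomp.image hTcont).measurableSet
    have hLmeas : MeasurableSet L := hLcomp.measurableSet
    -- the map of volume under e
    have hmap : Measure.map e volume =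
        ENNReal.ofReal (|(t ^ l)⁻¹|) • (volume : Measure (EuclideanSpace ℝ (Fin l))) := by
      have h1 : (⇑e : EuclideanSpace ℝ (Fin l) → EuclideanSpace ℝ (Fin l)) =
          (fun z => c + z) ∘ (fun z => t • z) ∘ (fun z => z + (-c)) := by
        funext y; rw [he]; simp [hT, sub_eq_add_neg]
      rw [h1, ← Measure.map_map (by fun_prop) (by fun_prop),
        ← Measure.map_map (by fun_prop) (by fun_prop)]
      rw [show (Measure.map (fun z => z + (-c)) (volume : Measure (EuclideanSpace ℝ (Fin l))))
          = volume from map_add_right_eq_self volume (-c)]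
      rw [MeasureTheory.Measure.map_addHaar_smul volume htne, Measure.map_smul,
        show (Measure.map (fun z => c + z) (volume : Measure (EuclideanSpace ℝ (Fin l))))
          = volume from map_add_left_eq_self volume c, finrank_euclideanSpace_fin]
    -- main computation
    set f : EuclideanSpace ℝ (Fin l) → ENNReal := fun x => ENNReal.ofReal (ρ x) with hf
    have hμTL : μ (T '' L) = ∫⁻ x, (T '' L).indicator f x ∂volume := by
      rw [hμ, withDensity_apply _ hTLmeas, lintegral_indicator hTLmeas]
    have hμL : μ L = ∫⁻ x, L.indicator f x ∂volume := by
      rw [hμ, withDensity_apply _ hLmeas, lintegral_indicator hLmeas]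
    have hvol_eq : (volume : Measure (EuclideanSpace ℝ (Fin l)))
        = ENNReal.ofReal (t ^ l) • Measure.map e volume := by
      rw [hmap, smul_smul, ← ENNReal.ofReal_mul htl.le]
      rw [abs_of_nonneg (inv_nonneg.mpr htl.le), mul_inv_cancel₀ htl.ne']
      simp
    have hchange : ∫⁻ x, (T '' L).indicator f x ∂volume
        = ENNReal.ofReal (t ^ l) * ∫⁻ y, (T '' L).indicator f (T y) ∂volume := by
      conv_lhs => rw [hvol_eq]
      rw [lintegral_smul_measure, MeasureTheory.lintegral_map_equiv]
      simp only [he, smul_eq_mul]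
    have hind : ∀ y, (T '' L).indicator f (T y) = L.indicator (fun y => f (T y)) y := by
      intro y
      by_cases hy : y ∈ L
      · rw [Set.indicator_of_mem hy, Set.indicator_of_mem (Set.mem_image_of_mem T hy)]
      · rw [Set.indicator_of_notMem hy, Set.indicator_of_notMem]
        intro ⟨z, hz, hzy⟩
        exact hy (hTinj hzy ▸ hz)
    have hmono : ∫⁻ y, L.indicator f y ∂volume
        ≤ ∫⁻ y, L.indicator (fun y => f (T y)) y ∂volume := by
      apply lintegral_mono
      intro y
      by_cases hy : y ∈ L
      · rw [Set.indicator_of_mem hy, Set.indicator_of_mem hy]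
        exact ENNReal.ofReal_le_ofReal (key y hy)
      · rw [Set.indicator_of_notMem hy, Set.indicator_of_notMem hy]
    calc ENNReal.ofReal (t ^ l) * μ L
        = ENNReal.ofReal (t ^ l) * ∫⁻ y, L.indicator f y ∂volume := by rw [hμL]
      _ ≤ ENNReal.ofReal (t ^ l) * ∫⁻ y, L.indicator (fun y => f (T y)) y ∂volume := by
          gcongr
      _ = ENNReal.ofReal (t ^ l) * ∫⁻ y, (T '' L).indicator f (T y) ∂volume := by
          congr 1; exact lintegral_congr fun y => (hind y).symm
      _ = ∫⁻ x, (T '' L).indicator f x ∂volume := hchange.symm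
      _ = μ (T '' L) := hμTL.symm
end

section
/- Let M be a complete Riemannian manifold of dimension n, X ⊆ M bounded, ℓ ≥ 1, and 0 ≤ k ≤ n. Then the upper Minkowski k-content satisfies M̄_k(X, M × ℝ^ℓ) ≤ M̄_k(X, M), and the lower Minkowski k-content satisfies M̲_k(X, M × ℝ^ℓ) ≥ M̲_k(X, M), where X is identified with X × {0} ⊆ M × ℝ^ℓ. -/
open MeasureTheory Filter

/-- The volume of the unit ball in `ℝ^m`. -/
noncomputable def unitBallVol (m : ℕ) : ℝ :=
  Real.pi ^ ((m : ℝ) / 2) / Real.Gamma ((m : ℝ) / 2 + 1)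

/-- The lower Minkowski content of codimension `m` associated to the neighborhood-volume
function `ν` (`ν t` = volume of the `t`-neighborhood): `liminf_{t→0⁺} ν(t)/(v_m t^m)`. -/
noncomputable def lowerMinkOf (ν : ℝ → ENNReal) (m : ℕ) : ENNReal :=
  liminf (fun t : ℝ => ν t / ENNReal.ofReal (unitBallVol m * t ^ m))
    (nhdsWithin 0 (Set.Ioi (0 : ℝ)))

/-- The upper Minkowski content of codimension `m` associated to `ν`. -/
noncomputable def upperMinkOf (ν : ℝ → ENNReal) (m : ℕ) : ENNReal :=
  limsup (fun t : ℝ => ν t / ENNReal.ofReal (unitBallVol m * t ^ m))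
    (nhdsWithin 0 (Set.Ioi (0 : ℝ)))

open Metric Set

lemma unitBallVol_pos (m : ℕ) : 0 < unitBallVol m := by
  apply div_pos (Real.rpow_pos_of_pos Real.pi_pos _)
  apply Real.Gamma_pos_of_pos; positivity

lemma sqrt_pi_pow (c : ℕ) : (Real.sqrt Real.pi) ^ c = Real.pi ^ ((c : ℝ) / 2) := by
  rw [Real.sqrt_eq_rpow, ← Real.rpow_natCast (Real.pi ^ ((1:ℝ)/2)) c,
    ← Real.rpow_mul Real.pi_pos.le]
  congr 1
  ring

lemma volume_closedBall_eucl (c : ℕ) {ρ : ℝ} (hρ : 0 ≤ ρ) :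
    volume (Metric.closedBall (0 : EuclideanSpace ℝ (Fin c)) ρ)
      = ENNReal.ofReal (unitBallVol c * ρ ^ c) := by
  rcases Nat.eq_zero_or_pos c with rfl | hc
  · have h1 : Metric.closedBall (0 : EuclideanSpace ℝ (Fin 0)) ρ = Set.univ := by
      ext x
      simp [Metric.mem_closedBall, Subsingleton.elim x 0, hρ]
    have h2 : volume (Set.univ : Set (EuclideanSpace ℝ (Fin 0))) = 1 := by
      rw [← Set.preimage_univ (f := (MeasurableEquiv.toLp 2 (Fin 0 → ℝ)).symm),
        (EuclideanSpace.volume_preserving_symm_measurableEquiv_toLp (Fin 0)).measure_preimage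
          MeasurableSet.univ.nullMeasurableSet]
      rw [MeasureTheory.volume_pi, Measure.pi_univ]
      simp
    rw [h1, h2]
    norm_num [unitBallVol]
  · have : Nonempty (Fin c) := ⟨⟨0, hc⟩⟩
    rw [EuclideanSpace.volume_closedBall]
    rw [← ENNReal.ofReal_pow hρ, ← ENNReal.ofReal_mul (by positivity)]
    congr 1
    simp only [Fintype.card_fin]
    rw [sqrt_pi_pow, unitBallVol]
    ring

lemma volume_ball_eucl (c : ℕ) (hc : 1 ≤ c) {ρ : ℝ} (hρ : 0 ≤ ρ) :
    volume (Metric.ball (0 : EuclideanSpace ℝ (Fin c)) ρ)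
      = ENNReal.ofReal (unitBallVol c * ρ ^ c) := by
  have : Nonempty (Fin c) := ⟨⟨0, hc⟩⟩
  rw [EuclideanSpace.volume_ball]
  rw [← ENNReal.ofReal_pow hρ, ← ENNReal.ofReal_mul (by positivity)]
  congr 1
  simp only [Fintype.card_fin]
  rw [sqrt_pi_pow, unitBallVol]
  ring
open MeasureTheory Filter Metric Set

noncomputable def psiFun (a b : ℕ) :
    (EuclideanSpace ℝ (Fin a) × EuclideanSpace ℝ (Fin b)) ≃ᵐ EuclideanSpace ℝ (Fin (a + b)) :=
  ((MeasurableEquiv.prodCongr (MeasurableEquiv.toLp 2 (Fin a → ℝ)).symm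
      (MeasurableEquiv.toLp 2 (Fin b → ℝ)).symm).trans
    ((MeasurableEquiv.sumPiEquivProdPi (fun _ : Fin a ⊕ Fin b => ℝ)).symm.trans
      ((MeasurableEquiv.piCongrLeft (fun _ : Fin (a + b) => ℝ) finSumFinEquiv).trans
        (MeasurableEquiv.toLp 2 (Fin (a + b) → ℝ)).symm.symm)))

lemma psiFun_measurePreserving (a b : ℕ) :
    MeasurePreserving (psiFun a b)
      ((volume : Measure (EuclideanSpace ℝ (Fin a))).prod
        (volume : Measure (EuclideanSpace ℝ (Fin b)))) volume := by
  have h1 : MeasurePreserving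
      (MeasurableEquiv.prodCongr (MeasurableEquiv.toLp 2 (Fin a → ℝ)).symm
        (MeasurableEquiv.toLp 2 (Fin b → ℝ)).symm) (volume.prod volume) (volume.prod volume) :=
    (EuclideanSpace.volume_preserving_symm_measurableEquiv_toLp (Fin a)).prod
      (EuclideanSpace.volume_preserving_symm_measurableEquiv_toLp (Fin b))
  have h2 := volume_measurePreserving_sumPiEquivProdPi_symm (fun _ : Fin a ⊕ Fin b => ℝ)
  have h3 := volume_measurePreserving_piCongrLeft (fun _ : Fin (a + b) => ℝ) finSumFinEquiv
  have h4 := (EuclideanSpace.volume_preserving_symm_measurableEquiv_toLp (Fin (a + b))).symm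
  exact ((h4.comp h3).comp h2).comp h1

lemma norm_sq_eucl {c : ℕ} (y : EuclideanSpace ℝ (Fin c)) : ‖y‖ ^ 2 = ∑ i, (y i) ^ 2 := by
  rw [EuclideanSpace.norm_eq, Real.sq_sqrt (by positivity)]
  simp [sq_abs]

lemma psiFun_apply_inl (a b : ℕ) (x : EuclideanSpace ℝ (Fin a) × EuclideanSpace ℝ (Fin b))
    (i : Fin a) : psiFun a b x (finSumFinEquiv (Sum.inl i)) = x.1 i := by
  exact Equiv.piCongrLeft_apply_apply (P := fun _ : Fin (a + b) => ℝ) (e := finSumFinEquiv)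
    ((Equiv.sumPiEquivProdPi (fun _ : Fin a ⊕ Fin b => ℝ)).symm (x.1.ofLp, x.2.ofLp)) (Sum.inl i)

lemma psiFun_apply_inr (a b : ℕ) (x : EuclideanSpace ℝ (Fin a) × EuclideanSpace ℝ (Fin b))
    (j : Fin b) : psiFun a b x (finSumFinEquiv (Sum.inr j)) = x.2 j := by
  exact Equiv.piCongrLeft_apply_apply (P := fun _ : Fin (a + b) => ℝ) (e := finSumFinEquiv)
    ((Equiv.sumPiEquivProdPi (fun _ : Fin a ⊕ Fin b => ℝ)).symm (x.1.ofLp, x.2.ofLp)) (Sum.inr j)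

lemma psiFun_norm_sq (a b : ℕ) (x : EuclideanSpace ℝ (Fin a) × EuclideanSpace ℝ (Fin b)) :
    ‖psiFun a b x‖ ^ 2 = ‖x.1‖ ^ 2 + ‖x.2‖ ^ 2 := by
  rw [norm_sq_eucl, norm_sq_eucl, norm_sq_eucl]
  rw [← Equiv.sum_comp finSumFinEquiv (fun j => (psiFun a b x j) ^ 2)]
  rw [Fintype.sum_sum_type]
  congr 1
  · exact Finset.sum_congr rfl fun i _ => by rw [psiFun_apply_inl]
  · exact Finset.sum_congr rfl fun j _ => by rw [psiFun_apply_inr]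
open MeasureTheory Filter Metric Set

lemma sum_measure_inter_le {α : Type*} [MeasurableSpace α] (μ : Measure α)
    (R : ℕ → Set α) (hR : ∀ i, MeasurableSet (R i))
    (hd : Pairwise (Function.onFun Disjoint R)) :
    ∀ (N : ℕ) (A : Set α), ∑ i ∈ Finset.range N, μ (A ∩ R i) ≤ μ A := by
  intro N
  induction N with
  | zero => simp
  | succ N ih =>
    intro A
    rw [Finset.sum_range_succ]
    have h1 : ∑ i ∈ Finset.range N, μ (A ∩ R i) ≤ μ (A \ R N) := by
      refine le_trans (Finset.sum_le_sum fun i hi => measure_mono ?_) (ih (A \ R N))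
      rintro z ⟨hzA, hzR⟩
      exact ⟨⟨hzA, fun hzN =>
        Set.disjoint_left.1 (hd (Nat.ne_of_lt (Finset.mem_range.1 hi))) hzR hzN⟩, hzR⟩
    calc ∑ i ∈ Finset.range N, μ (A ∩ R i) + μ (A ∩ R N)
        ≤ μ (A \ R N) + μ (A ∩ R N) := add_le_add h1 le_rfl
      _ = μ A := by rw [add_comm, measure_inter_add_diff A (hR N)]

lemma exists_shell (r : ℕ → ℝ) (u : ℝ) :
    ∀ N : ℕ, 1 ≤ N → r 0 ≤ u → u ≤ r N → ∃ i < N, r i ≤ u ∧ u ≤ r (i + 1) := by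
  intro N
  induction N with
  | zero => omega
  | succ N ih =>
    intro _ h0 hN
    by_cases hc : u ≤ r N
    · rcases Nat.eq_zero_or_pos N with rfl | hN1
      · exact ⟨0, by omega, h0, hN⟩
      · obtain ⟨i, hi, h⟩ := ih hN1 h0 hc
        exact ⟨i, by omega, h⟩
    · exact ⟨N, by omega, (not_le.1 hc).le, hN⟩

lemma sq_le_of_le {x y : ℝ} (hy : 0 ≤ x) (h : x ≤ y) : x ^ 2 ≤ y ^ 2 := by nlinarith

lemma le_of_sq_le {x y : ℝ} (hx : 0 ≤ x) (hy : 0 ≤ y) (h : x ^ 2 ≤ y ^ 2) : x ≤ y := by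
  nlinarith

noncomputable def rad (l N : ℕ) (t : ℝ) (i : ℕ) : ℝ := t * ((i : ℝ) / N) ^ ((l : ℝ)⁻¹)

noncomputable def srad (l N : ℕ) (t : ℝ) (i : ℕ) : ℝ := Real.sqrt (t ^ 2 - rad l N t i ^ 2)

section radlem
variable {l N : ℕ} {t : ℝ} (ht : 0 < t) (hl : 1 ≤ l) (hN : 1 ≤ N)
include ht hl hN

lemma rad_nonneg (i : ℕ) : 0 ≤ rad l N t i :=
  mul_nonneg ht.le (Real.rpow_nonneg (by positivity) _)

lemma rad_mono : Monotone (rad l N t) := by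
  apply monotone_nat_of_le_succ
  intro i
  apply mul_le_mul_of_nonneg_left _ ht.le
  apply Real.rpow_le_rpow (by positivity) _ (by positivity)
  have hN0 : (0:ℝ) < N := by exact_mod_cast hN
  gcongr
  push_cast; linarith


lemma rad_le (i : ℕ) (hiN : i ≤ N) : rad l N t i ≤ t := by
  have h1 : ((i : ℝ) / N) ^ ((l : ℝ)⁻¹) ≤ 1 := by
    apply Real.rpow_le_one (by positivity) _ (by positivity)
    rw [div_le_one (by exact_mod_cast hN : (0:ℝ) < N)]
    exact_mod_cast hiN
  calc rad l N t i ≤ t * 1 := mul_le_mul_of_nonneg_left h1 ht.le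
    _ = t := mul_one t

lemma rad_lt (i : ℕ) (hiN : i < N) : rad l N t i < t := by
  have h1 : ((i : ℝ) / N) ^ ((l : ℝ)⁻¹) < 1 := by
    apply Real.rpow_lt_one (by positivity) _ (by positivity)
    rw [div_lt_one (by exact_mod_cast hN : (0:ℝ) < N)]
    exact_mod_cast hiN
  calc rad l N t i < t * 1 := mul_lt_mul_of_pos_left h1 ht
    _ = t := mul_one t

lemma rad_zero : rad l N t 0 = 0 := by
  have h0 : ((0:ℕ) : ℝ) / N = 0 := by simp
  rw [rad, h0, Real.zero_rpow (by positivity : ((l:ℝ)⁻¹) ≠ 0), mul_zero]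

lemma rad_N : rad l N t N = t := by
  have : ((N : ℝ) / N) = 1 := div_self (Nat.cast_ne_zero.mpr (by omega))
  simp [rad, this]

lemma rad_pow (i : ℕ) : rad l N t i ^ l = t ^ l * ((i : ℝ) / N) := by
  rw [rad, mul_pow, Real.rpow_inv_natCast_pow (by positivity) (by omega)]

lemma rad_pow_succ_sub (i : ℕ) :
    rad l N t (i + 1) ^ l - rad l N t i ^ l = t ^ l / N := by
  rw [rad_pow ht hl hN, rad_pow ht hl hN]
  push_cast
  field_simp
  ring

lemma srad_nonneg (i : ℕ) : 0 ≤ srad l N t i := Real.sqrt_nonneg _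

lemma srad_le (i : ℕ) : srad l N t i ≤ t := by
  rw [srad]
  calc Real.sqrt (t ^ 2 - rad l N t i ^ 2) ≤ Real.sqrt (t ^ 2) := by
        apply Real.sqrt_le_sqrt
        nlinarith [rad_nonneg ht hl hN (l := l) (N := N) i]
    _ = t := Real.sqrt_sq ht.le

lemma srad_sq (i : ℕ) (hiN : i ≤ N) : srad l N t i ^ 2 = t ^ 2 - rad l N t i ^ 2 := by
  rw [srad, Real.sq_sqrt]
  have h1 := rad_le ht hl hN i hiN
  have h2 := rad_nonneg ht hl hN (l := l) (N := N) i
  nlinarith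

lemma srad_pos (i : ℕ) (hiN : i < N) : 0 < srad l N t i := by
  rw [srad, Real.sqrt_pos]
  have h1 := rad_lt ht hl hN i hiN
  have h2 := rad_nonneg ht hl hN (l := l) (N := N) i
  nlinarith

lemma srad_zero : srad l N t 0 = t := by
  rw [srad, rad_zero ht hl hN]
  simp [Real.sqrt_sq ht.le]

lemma srad_N : srad l N t N = 0 := by
  rw [srad, rad_N ht hl hN]
  simp

lemma srad_anti (i j : ℕ) (hij : i ≤ j) : srad l N t j ≤ srad l N t i := by
  apply Real.sqrt_le_sqrt
  have h1 := rad_mono ht hl hN (l := l) (N := N) hij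
  have h2 := rad_nonneg ht hl hN (l := l) (N := N) i
  nlinarith

end radlem
open MeasureTheory Filter Metric Set

lemma mem_cthick_iff {M : Type*} [MetricSpace M] {X : Set M} (hXne : X.Nonempty)
    {δ : ℝ} (hδ : 0 ≤ δ) (x : M) :
    x ∈ Metric.cthickening δ X ↔ Metric.infDist x X ≤ δ := by
  rw [Metric.mem_cthickening_iff,
    ENNReal.le_ofReal_iff_toReal_le (Metric.infEdist_ne_top hXne) hδ]
  rfl

lemma le_infDist' {M : Type*} [MetricSpace M] {s : Set M} (hs : s.Nonempty) {x : M} {b : ℝ}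
    (hb : ∀ y ∈ s, b ≤ dist x y) : b ≤ Metric.infDist x s := by
  by_contra h
  obtain ⟨y, hy, hlt⟩ := (Metric.infDist_lt_iff hs).1 (not_le.1 h)
  exact hlt.not_ge (hb y hy)

lemma dist_L2' {α β : Type*} [PseudoMetricSpace α] [PseudoMetricSpace β]
    (x y : WithLp 2 (α × β)) :
    dist x y = Real.sqrt (dist x.fst y.fst ^ 2 + dist x.snd y.snd ^ 2) := by
  rw [WithLp.prod_dist_eq_add (by norm_num : 0 < (2 : ENNReal).toReal)]
  have h2 : ((2 : ENNReal)).toReal = (2 : ℝ) := by norm_num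
  rw [h2, Real.sqrt_eq_rpow]
  norm_num [Real.rpow_natCast]

section prodmetric
variable {M : Type*} [MetricSpace M] {β : Type*} [NormedAddCommGroup β]
  {X : Set M} (hXne : X.Nonempty)
include hXne

lemma Sprod_nonempty :
    ((WithLp.equiv 2 (M × β)).symm '' (X ×ˢ ({0} : Set β))).Nonempty := by
  obtain ⟨x, hx⟩ := hXne
  exact ⟨_, ⟨(x, 0), ⟨hx, rfl⟩, rfl⟩⟩

lemma infDist_prod (x : M) (y : β) :
    Metric.infDist ((WithLp.equiv 2 (M × β)).symm (x, y))
        ((WithLp.equiv 2 (M × β)).symm '' (X ×ˢ ({0} : Set β)))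
      = Real.sqrt (Metric.infDist x X ^ 2 + ‖y‖ ^ 2) := by
  have hI0 : 0 ≤ Metric.infDist x X := Metric.infDist_nonneg
  apply le_antisymm
  · have hcont : Tendsto (fun ε : ℝ => Real.sqrt ((Metric.infDist x X + ε) ^ 2 + ‖y‖ ^ 2))
        (nhdsWithin 0 (Set.Ioi (0:ℝ)))
        (nhds (Real.sqrt (Metric.infDist x X ^ 2 + ‖y‖ ^ 2))) := by
      have hc : Continuous fun ε : ℝ =>
          Real.sqrt ((Metric.infDist x X + ε) ^ 2 + ‖y‖ ^ 2) := by
        fun_prop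
      simpa using (hc.tendsto 0).mono_left nhdsWithin_le_nhds
    refine ge_of_tendsto hcont ?_
    filter_upwards [self_mem_nhdsWithin] with ε hε
    obtain ⟨x', hx', hd⟩ := (Metric.infDist_lt_iff hXne).1
      (lt_add_of_pos_right _ (Set.mem_Ioi.1 hε))
    have hmem : (WithLp.equiv 2 (M × β)).symm (x', (0:β)) ∈
        (WithLp.equiv 2 (M × β)).symm '' (X ×ˢ ({0} : Set β)) :=
      ⟨(x', 0), ⟨hx', rfl⟩, rfl⟩
    refine le_trans (Metric.infDist_le_dist_of_mem hmem) ?_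
    rw [dist_L2']
    apply Real.sqrt_le_sqrt
    have h1 : dist ((WithLp.equiv 2 (M × β)).symm (x, y)).fst
        ((WithLp.equiv 2 (M × β)).symm (x', (0:β))).fst = dist x x' := rfl
    have h2 : dist ((WithLp.equiv 2 (M × β)).symm (x, y)).snd
        ((WithLp.equiv 2 (M × β)).symm (x', (0:β))).snd = ‖y‖ := by
      show dist y 0 = ‖y‖
      rw [dist_zero_right]
    rw [h1, h2]
    have := dist_nonneg (x := x) (y := x')
    nlinarith
  · apply le_infDist' (Sprod_nonempty hXne)
    rintro q ⟨⟨x', y0⟩, ⟨hx', hy0⟩, rfl⟩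
    have hy0' : y0 = 0 := hy0
    subst hy0'
    rw [dist_L2']
    have h1 : dist ((WithLp.equiv 2 (M × β)).symm (x, y)).fst
        ((WithLp.equiv 2 (M × β)).symm (x', (0:β))).fst = dist x x' := rfl
    have h2 : dist ((WithLp.equiv 2 (M × β)).symm (x, y)).snd
        ((WithLp.equiv 2 (M × β)).symm (x', (0:β))).snd = ‖y‖ := by
      show dist y 0 = ‖y‖
      rw [dist_zero_right]
    rw [h1, h2]
    apply Real.sqrt_le_sqrt
    have h3 : Metric.infDist x X ≤ dist x x' := Metric.infDist_le_dist_of_mem hx'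
    nlinarith

lemma image_cthickening_eq {t : ℝ} (ht : 0 ≤ t) :
    (WithLp.equiv 2 (M × β)) '' Metric.cthickening t
        ((WithLp.equiv 2 (M × β)).symm '' (X ×ˢ ({0} : Set β)))
      = {p : M × β | Metric.infDist p.1 X ^ 2 + ‖p.2‖ ^ 2 ≤ t ^ 2} := by
  ext p
  rw [Equiv.image_eq_preimage_symm, Set.mem_preimage,
    mem_cthick_iff (Sprod_nonempty hXne) ht]
  have hp : (WithLp.equiv 2 (M × β)).symm p = (WithLp.equiv 2 (M × β)).symm (p.1, p.2) := rfl
  rw [hp, infDist_prod hXne]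
  rw [Set.mem_setOf_eq]
  constructor
  · intro h
    have h1 := Real.sq_sqrt (by positivity : (0:ℝ) ≤ Metric.infDist p.1 X ^ 2 + ‖p.2‖ ^ 2)
    nlinarith [Real.sqrt_nonneg (Metric.infDist p.1 X ^ 2 + ‖p.2‖ ^ 2)]
  · intro h
    rw [show t = Real.sqrt (t ^ 2) from (Real.sqrt_sq ht).symm]
    exact Real.sqrt_le_sqrt h

end prodmetric

section eucl
variable {m l N : ℕ} {t : ℝ}

lemma vol_shell_cc (hl : 1 ≤ l) (hN : 1 ≤ N) (ht : 0 < t) (i : ℕ) :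
    volume (Metric.closedBall (0 : EuclideanSpace ℝ (Fin l)) (rad l N t (i+1)) \
        Metric.closedBall 0 (rad l N t i))
      = ENNReal.ofReal (unitBallVol l * (t ^ l / N)) := by
  rw [measure_diff (Metric.closedBall_subset_closedBall (rad_mono ht hl hN (Nat.le_succ i)))
      measurableSet_closedBall.nullMeasurableSet
      (by rw [volume_closedBall_eucl l (rad_nonneg ht hl hN i)]; exact ENNReal.ofReal_ne_top),
    volume_closedBall_eucl l (rad_nonneg ht hl hN (i+1)),
    volume_closedBall_eucl l (rad_nonneg ht hl hN i),
    ← ENNReal.ofReal_sub _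
      (mul_nonneg (unitBallVol_pos l).le (pow_nonneg (rad_nonneg ht hl hN i) l))]
  congr 1
  rw [← mul_sub, rad_pow_succ_sub ht hl hN i]

lemma vol_shell_co (hl : 1 ≤ l) (hN : 1 ≤ N) (ht : 0 < t) (i : ℕ) :
    volume (Metric.closedBall (0 : EuclideanSpace ℝ (Fin l)) (rad l N t (i+1)) \
        Metric.ball 0 (rad l N t i))
      = ENNReal.ofReal (unitBallVol l * (t ^ l / N)) := by
  rw [measure_diff (Metric.ball_subset_closedBall.trans
        (Metric.closedBall_subset_closedBall (rad_mono ht hl hN (Nat.le_succ i))))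
      measurableSet_ball.nullMeasurableSet
      (by rw [volume_ball_eucl l hl (rad_nonneg ht hl hN i)]; exact ENNReal.ofReal_ne_top),
    volume_closedBall_eucl l (rad_nonneg ht hl hN (i+1)),
    volume_ball_eucl l hl (rad_nonneg ht hl hN i),
    ← ENNReal.ofReal_sub _
      (mul_nonneg (unitBallVol_pos l).le (pow_nonneg (rad_nonneg ht hl hN i) l))]
  congr 1
  rw [← mul_sub, rad_pow_succ_sub ht hl hN i]

/-- Covering estimate in Euclidean space. -/
lemma eucl_upper (hl : 1 ≤ l) (hN : 1 ≤ N) (ht : 0 < t) :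
    unitBallVol (m + l) * t ^ (m + l) ≤
      ∑ i ∈ Finset.range N,
        unitBallVol m * srad l N t i ^ m * (unitBallVol l * (t ^ l / N)) := by
  have key : volume (Metric.closedBall (0 : EuclideanSpace ℝ (Fin (m + l))) t) ≤
      ∑ i ∈ Finset.range N, ENNReal.ofReal (unitBallVol m * srad l N t i ^ m) *
        ENNReal.ofReal (unitBallVol l * (t ^ l / N)) := by
    have hcov : Metric.closedBall (0 : EuclideanSpace ℝ (Fin (m + l))) t ⊆
        ⋃ i ∈ Finset.range N, (psiFun m l) ''
          (Metric.closedBall 0 (srad l N t i) ×ˢ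
            (Metric.closedBall (0 : EuclideanSpace ℝ (Fin l)) (rad l N t (i+1)) \
              Metric.ball 0 (rad l N t i))) := by
      intro z hz
      set w := (psiFun m l).symm z with hw
      have hzw : psiFun m l w = z := (psiFun m l).apply_symm_apply z
      have hnz : ‖z‖ ≤ t := by simpa [dist_zero_right] using hz
      have hsq : ‖w.1‖ ^ 2 + ‖w.2‖ ^ 2 ≤ t ^ 2 := by
        rw [← psiFun_norm_sq, hzw]
        exact sq_le_of_le (norm_nonneg z) hnz
      have hw2 : ‖w.2‖ ≤ t := by
        apply le_of_sq_le (norm_nonneg _) ht.le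
        nlinarith [sq_nonneg ‖w.1‖]
      obtain ⟨i, hiN, hi1, hi2⟩ := exists_shell (rad l N t) ‖w.2‖ N hN
        (by rw [rad_zero ht hl hN]; exact norm_nonneg _)
        (by rwa [rad_N ht hl hN])
      refine Set.mem_biUnion (Finset.mem_range.2 hiN) ⟨w, ⟨?_, ?_, ?_⟩, hzw⟩
      · rw [Metric.mem_closedBall, dist_zero_right]
        apply le_of_sq_le (norm_nonneg _) (srad_nonneg ht hl hN i)
        rw [srad_sq ht hl hN i hiN.le]
        nlinarith [sq_le_of_le (rad_nonneg ht hl hN i) hi1]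
      · rw [Metric.mem_closedBall, dist_zero_right]; exact hi2
      · rw [Metric.mem_ball, dist_zero_right]; exact not_lt.2 hi1
    refine le_trans (measure_mono hcov) (le_trans (measure_biUnion_finset_le _ _) ?_)
    apply Finset.sum_le_sum
    intro i hi
    rw [MeasurableEquiv.image_eq_preimage_symm,
      ((psiFun_measurePreserving m l).symm (psiFun m l)).measure_preimage
        ((measurableSet_closedBall.prod
          (measurableSet_closedBall.diff measurableSet_ball)).nullMeasurableSet),
      Measure.prod_prod, volume_closedBall_eucl m (srad_nonneg ht hl hN i),
      vol_shell_co hl hN ht i]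
  rw [volume_closedBall_eucl (m + l) ht.le] at key
  have h2 : ∀ i ∈ Finset.range N,
      ENNReal.ofReal (unitBallVol m * srad l N t i ^ m) *
        ENNReal.ofReal (unitBallVol l * (t ^ l / N))
      = ENNReal.ofReal (unitBallVol m * srad l N t i ^ m * (unitBallVol l * (t ^ l / N))) := by
    intro i _
    rw [← ENNReal.ofReal_mul
      (mul_nonneg (unitBallVol_pos m).le (pow_nonneg (srad_nonneg ht hl hN i) m))]
  rw [Finset.sum_congr rfl h2, ← ENNReal.ofReal_sum_of_nonneg (fun i _ =>
    mul_nonneg (mul_nonneg (unitBallVol_pos m).le (pow_nonneg (srad_nonneg ht hl hN i) m))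
      (mul_nonneg (unitBallVol_pos l).le (by positivity)))] at key
  exact (ENNReal.ofReal_le_ofReal_iff (Finset.sum_nonneg (fun i _ =>
    mul_nonneg (mul_nonneg (unitBallVol_pos m).le (pow_nonneg (srad_nonneg ht hl hN i) m))
      (mul_nonneg (unitBallVol_pos l).le (by positivity))))).1 key

lemma shellP_disjoint (hl : 1 ≤ l) (hN : 1 ≤ N) (ht : 0 < t) :
    Pairwise (Function.onFun Disjoint (fun i =>
      Metric.closedBall (0 : EuclideanSpace ℝ (Fin l)) (rad l N t (i+1)) \
        Metric.closedBall 0 (rad l N t i))) := by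
  have key : ∀ i j, i < j → Disjoint
      (Metric.closedBall (0 : EuclideanSpace ℝ (Fin l)) (rad l N t (i+1)) \
        Metric.closedBall 0 (rad l N t i))
      (Metric.closedBall (0 : EuclideanSpace ℝ (Fin l)) (rad l N t (j+1)) \
        Metric.closedBall 0 (rad l N t j)) := by
    intro i j hij
    rw [Set.disjoint_left]
    rintro z ⟨hz1, -⟩ ⟨-, hz2⟩
    exact hz2 (Metric.closedBall_subset_closedBall (rad_mono ht hl hN hij) hz1)
  intro i j hij
  rcases lt_or_gt_of_ne hij with h | h
  · exact key i j h
  · exact (key j i h).symm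

/-- Packing estimate in Euclidean space. -/
lemma eucl_lower (hl : 1 ≤ l) (hN : 1 ≤ N) (ht : 0 < t) :
    ∑ i ∈ Finset.range N,
        unitBallVol m * srad l N t (i+1) ^ m * (unitBallVol l * (t ^ l / N))
      ≤ unitBallVol (m + l) * t ^ (m + l) := by
  have key : ∑ i ∈ Finset.range N, ENNReal.ofReal (unitBallVol m * srad l N t (i+1) ^ m) *
        ENNReal.ofReal (unitBallVol l * (t ^ l / N))
      ≤ volume (Metric.closedBall (0 : EuclideanSpace ℝ (Fin (m + l))) t) := by
    set C : ℕ → Set (EuclideanSpace ℝ (Fin (m + l))) := fun i => (psiFun m l) ''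
      (Metric.closedBall 0 (srad l N t (i+1)) ×ˢ
        (Metric.closedBall (0 : EuclideanSpace ℝ (Fin l)) (rad l N t (i+1)) \
          Metric.closedBall 0 (rad l N t i))) with hC
    have hCmeas : ∀ i, MeasurableSet (C i) := by
      intro i
      simp only [hC, MeasurableEquiv.image_eq_preimage_symm]
      exact (psiFun m l).symm.measurable
        (measurableSet_closedBall.prod (measurableSet_closedBall.diff measurableSet_closedBall))
    have hCvol : ∀ i, volume (C i) = ENNReal.ofReal (unitBallVol m * srad l N t (i+1) ^ m) *
        ENNReal.ofReal (unitBallVol l * (t ^ l / N)) := by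
      intro i
      simp only [hC, MeasurableEquiv.image_eq_preimage_symm,
        ((psiFun_measurePreserving m l).symm (psiFun m l)).measure_preimage
          ((measurableSet_closedBall.prod
            (measurableSet_closedBall.diff measurableSet_closedBall)).nullMeasurableSet),
        Measure.prod_prod, volume_closedBall_eucl m (srad_nonneg ht hl hN (i+1)),
        vol_shell_cc hl hN ht i]
    have hCdisj : (↑(Finset.range N) : Set ℕ).PairwiseDisjoint C := by
      intro i _ j _ hij
      simp only [hC]
      apply Set.disjoint_image_of_injective (psiFun m l).injective
      have hsh := shellP_disjoint hl hN ht hij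
      rw [Function.onFun, Set.disjoint_left] at hsh
      rw [Set.disjoint_left]
      rintro p ⟨-, hp2⟩ ⟨-, hq2⟩
      exact hsh hp2 hq2
    have hCsub : ∀ i ∈ Finset.range N, C i ⊆
        Metric.closedBall (0 : EuclideanSpace ℝ (Fin (m + l))) t := by
      intro i hi
      simp only [hC]
      rintro z ⟨w, ⟨hw1, hw2, -⟩, rfl⟩
      rw [Metric.mem_closedBall, dist_zero_right] at hw1 hw2 ⊢
      apply le_of_sq_le (norm_nonneg _) ht.le
      rw [psiFun_norm_sq]
      have e1 : srad l N t (i+1) ^ 2 + rad l N t (i+1) ^ 2 = t ^ 2 := by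
        rw [srad_sq ht hl hN (i+1) (Finset.mem_range.1 hi)]
        ring
      nlinarith [sq_le_of_le (norm_nonneg w.1) hw1, sq_le_of_le (norm_nonneg w.2) hw2,
        srad_nonneg ht hl hN (i+1), rad_nonneg ht hl hN (i+1)]
    calc ∑ i ∈ Finset.range N, ENNReal.ofReal (unitBallVol m * srad l N t (i+1) ^ m) *
          ENNReal.ofReal (unitBallVol l * (t ^ l / N))
        = ∑ i ∈ Finset.range N, volume (C i) := by
          exact Finset.sum_congr rfl fun i _ => (hCvol i).symm
      _ = volume (⋃ i ∈ Finset.range N, C i) :=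
          (measure_biUnion_finset hCdisj fun i _ => hCmeas i).symm
      _ ≤ _ := measure_mono (Set.iUnion₂_subset hCsub)
  rw [volume_closedBall_eucl (m + l) ht.le] at key
  have h2 : ∀ i ∈ Finset.range N,
      ENNReal.ofReal (unitBallVol m * srad l N t (i+1) ^ m) *
        ENNReal.ofReal (unitBallVol l * (t ^ l / N))
      = ENNReal.ofReal (unitBallVol m * srad l N t (i+1) ^ m * (unitBallVol l * (t ^ l / N))) := by
    intro i _
    rw [← ENNReal.ofReal_mul
      (mul_nonneg (unitBallVol_pos m).le (pow_nonneg (srad_nonneg ht hl hN (i+1)) m))]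
  rw [Finset.sum_congr rfl h2, ← ENNReal.ofReal_sum_of_nonneg (fun i _ =>
    mul_nonneg (mul_nonneg (unitBallVol_pos m).le (pow_nonneg (srad_nonneg ht hl hN (i+1)) m))
      (mul_nonneg (unitBallVol_pos l).le (by positivity)))] at key
  exact (ENNReal.ofReal_le_ofReal_iff
    (mul_nonneg (unitBallVol_pos (m+l)).le (pow_nonneg ht.le (m+l)))).1 key
end eucl

section riemann
variable {m l N : ℕ} {t : ℝ}

lemma bridge (hl : 1 ≤ l) (hN : 1 ≤ N) (ht : 0 < t) :
    ∑ i ∈ Finset.range N, srad l N t i ^ m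
      ≤ (∑ i ∈ Finset.range N, srad l N t (i+1) ^ m) + t ^ m := by
  have h := Finset.sum_range_sub' (f := fun i => srad l N t i ^ m) N
  rw [Finset.sum_sub_distrib] at h
  have h0 : srad l N t 0 = t := srad_zero ht hl hN
  have hNn : 0 ≤ srad l N t N ^ m := pow_nonneg (srad_nonneg ht hl hN N) m
  simp only [h0] at h
  linarith

lemma vmB_eq : unitBallVol m * (unitBallVol l * (t ^ l / N)) * t ^ m
    = unitBallVol m * unitBallVol l * t ^ (m + l) / N := by
  rw [pow_add]
  ring

lemma riemann_upper (hl : 1 ≤ l) (hN : 1 ≤ N) (ht : 0 < t) :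
    ∑ i ∈ Finset.range N, unitBallVol m * srad l N t i ^ m * (unitBallVol l * (t ^ l / N))
      ≤ unitBallVol (m + l) * t ^ (m + l)
        + unitBallVol m * unitBallVol l * t ^ (m + l) / N := by
  have hB : 0 ≤ unitBallVol l * (t ^ l / N) :=
    mul_nonneg (unitBallVol_pos l).le (by positivity)
  have h1 : ∑ i ∈ Finset.range N, unitBallVol m * srad l N t i ^ m *
        (unitBallVol l * (t ^ l / N))
      = unitBallVol m * (unitBallVol l * (t ^ l / N)) * ∑ i ∈ Finset.range N, srad l N t i ^ m := by
    rw [Finset.mul_sum]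
    exact Finset.sum_congr rfl fun i _ => by ring
  have h2 : ∑ i ∈ Finset.range N, unitBallVol m * srad l N t (i+1) ^ m *
        (unitBallVol l * (t ^ l / N))
      = unitBallVol m * (unitBallVol l * (t ^ l / N)) *
          ∑ i ∈ Finset.range N, srad l N t (i+1) ^ m := by
    rw [Finset.mul_sum]
    exact Finset.sum_congr rfl fun i _ => by ring
  have hb := bridge (m := m) hl hN ht
  have he := eucl_lower (m := m) hl hN ht
  have hmul : unitBallVol m * (unitBallVol l * (t ^ l / N)) *
        (∑ i ∈ Finset.range N, srad l N t (i+1) ^ m + t ^ m)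
      ≤ unitBallVol (m + l) * t ^ (m + l)
        + unitBallVol m * unitBallVol l * t ^ (m + l) / N := by
    rw [mul_add, ← h2, vmB_eq]
    exact add_le_add he le_rfl
  calc ∑ i ∈ Finset.range N, unitBallVol m * srad l N t i ^ m * (unitBallVol l * (t ^ l / N))
      = unitBallVol m * (unitBallVol l * (t ^ l / N)) *
          ∑ i ∈ Finset.range N, srad l N t i ^ m := h1
    _ ≤ unitBallVol m * (unitBallVol l * (t ^ l / N)) *
          (∑ i ∈ Finset.range N, srad l N t (i+1) ^ m + t ^ m) := by
        apply mul_le_mul_of_nonneg_left hb (mul_nonneg (unitBallVol_pos m).le hB)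
    _ ≤ _ := hmul

lemma riemann_lower (hl : 1 ≤ l) (hN : 1 ≤ N) (ht : 0 < t) :
    unitBallVol (m + l) * t ^ (m + l)
        - 2 * (unitBallVol m * unitBallVol l * t ^ (m + l)) / N
      ≤ ∑ i ∈ Finset.range (N - 1),
          unitBallVol m * srad l N t (i+1) ^ m * (unitBallVol l * (t ^ l / N)) := by
  obtain ⟨N', rfl⟩ : ∃ N', N = N' + 1 := ⟨N - 1, by omega⟩
  simp only [Nat.add_sub_cancel]
  have hB : 0 ≤ unitBallVol l * (t ^ l / (N' + 1 : ℕ)) :=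
    mul_nonneg (unitBallVol_pos l).le (by positivity)
  have he := eucl_upper (m := m) hl hN ht
  have hb := bridge (m := m) hl hN ht
  have h1 : ∑ i ∈ Finset.range (N' + 1), unitBallVol m * srad l (N' + 1) t i ^ m *
        (unitBallVol l * (t ^ l / (N' + 1 : ℕ)))
      = unitBallVol m * (unitBallVol l * (t ^ l / (N' + 1 : ℕ))) *
          ∑ i ∈ Finset.range (N' + 1), srad l (N' + 1) t i ^ m := by
    rw [Finset.mul_sum]; exact Finset.sum_congr rfl fun i _ => by ring
  have hsplit : ∑ i ∈ Finset.range (N' + 1), srad l (N' + 1) t (i+1) ^ m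
      = (∑ i ∈ Finset.range N', srad l (N' + 1) t (i+1) ^ m)
          + srad l (N' + 1) t (N' + 1) ^ m := by
    rw [Finset.sum_range_succ]
  have hsN : srad l (N' + 1) t (N' + 1) ^ m ≤ t ^ m := by
    apply pow_le_pow_left₀ (srad_nonneg ht hl hN _) (srad_le ht hl hN _)
  have h2 : ∑ i ∈ Finset.range N', unitBallVol m * srad l (N' + 1) t (i+1) ^ m *
        (unitBallVol l * (t ^ l / (N' + 1 : ℕ)))
      = unitBallVol m * (unitBallVol l * (t ^ l / (N' + 1 : ℕ))) *
          ∑ i ∈ Finset.range N', srad l (N' + 1) t (i+1) ^ m := by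
    rw [Finset.mul_sum]; exact Finset.sum_congr rfl fun i _ => by ring
  have hvm : 0 ≤ unitBallVol m * (unitBallVol l * (t ^ l / (N' + 1 : ℕ))) :=
    mul_nonneg (unitBallVol_pos m).le hB
  have key : unitBallVol (m + l) * t ^ (m + l)
      ≤ unitBallVol m * (unitBallVol l * (t ^ l / (N' + 1 : ℕ))) *
          (∑ i ∈ Finset.range N', srad l (N' + 1) t (i+1) ^ m + 2 * t ^ m) := by
    refine le_trans (le_trans he (le_of_eq h1)) ?_
    refine le_trans (mul_le_mul_of_nonneg_left hb hvm) ?_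
    apply mul_le_mul_of_nonneg_left _ hvm
    rw [hsplit]
    linarith
  rw [mul_add, ← h2] at key
  have hfin : unitBallVol m * (unitBallVol l * (t ^ l / (N' + 1 : ℕ))) * (2 * t ^ m)
      = 2 * (unitBallVol m * unitBallVol l * t ^ (m + l)) / (N' + 1 : ℕ) := by
    rw [pow_add]; ring
  rw [hfin] at key
  linarith

end riemann

section mainest
variable {M : Type*} [MetricSpace M] [MeasureSpace M] [SigmaFinite (volume : Measure M)]
  {X : Set M} (hXne : X.Nonempty) {m l : ℕ} {t δ : ℝ}
include hXne

lemma main_upper_est (hl : 1 ≤ l) {c : ENNReal} (hc : c ≠ ⊤) (ht : 0 < t) (htδ : t < δ)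
    (Hν : ∀ u : ℝ, 0 < u → u < δ →
      volume (Metric.cthickening u X) ≤ c * ENNReal.ofReal (unitBallVol m * u ^ m)) :
    ((volume : Measure M).prod (volume : Measure (EuclideanSpace ℝ (Fin l))))
        {p : M × EuclideanSpace ℝ (Fin l) |
          Metric.infDist p.1 X ^ 2 + ‖p.2‖ ^ 2 ≤ t ^ 2}
      ≤ c * ENNReal.ofReal (unitBallVol (m + l) * t ^ (m + l)) := by
  set K := unitBallVol (m + l) * t ^ (m + l) with hK
  set Cst := unitBallVol m * unitBallVol l * t ^ (m + l) with hCst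
  have hlim : Tendsto (fun N : ℕ => c * ENNReal.ofReal (K + Cst / N)) atTop
      (nhds (c * ENNReal.ofReal K)) := by
    apply ENNReal.Tendsto.const_mul _ (Or.inr hc)
    apply (ENNReal.continuous_ofReal.tendsto K).comp
    have := tendsto_const_nhds (x := K) (f := atTop (α := ℕ)) |>.add
      (tendsto_const_div_atTop_nhds_zero_nat Cst)
    simpa using this
  refine ge_of_tendsto hlim ?_
  filter_upwards [eventually_ge_atTop 1] with N hN
  have hcov : {p : M × EuclideanSpace ℝ (Fin l) |
        Metric.infDist p.1 X ^ 2 + ‖p.2‖ ^ 2 ≤ t ^ 2} ⊆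
      ⋃ i ∈ Finset.range N, (Metric.cthickening (srad l N t i) X) ×ˢ
        (Metric.closedBall (0 : EuclideanSpace ℝ (Fin l)) (rad l N t (i+1)) \
          Metric.ball 0 (rad l N t i)) := by
    rintro ⟨x, y⟩ hp
    simp only [Set.mem_setOf_eq] at hp
    have hI0 : 0 ≤ Metric.infDist x X := Metric.infDist_nonneg
    have h2 : ‖y‖ ≤ t := by
      apply le_of_sq_le (norm_nonneg _) ht.le
      nlinarith
    obtain ⟨i, hiN, hi1, hi2⟩ := exists_shell (rad l N t) ‖y‖ N hN
      (by rw [rad_zero ht hl hN]; exact norm_nonneg _)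
      (by rwa [rad_N ht hl hN])
    refine Set.mem_biUnion (Finset.mem_range.2 hiN) ⟨?_, ?_, ?_⟩
    · -- membership in cthickening
      refine (mem_cthick_iff hXne (srad_nonneg ht hl hN i) x).2 ?_
      apply le_of_sq_le hI0 (srad_nonneg ht hl hN i)
      rw [srad_sq ht hl hN i hiN.le]
      nlinarith [sq_le_of_le (rad_nonneg ht hl hN i) hi1]
    · rw [Metric.mem_closedBall, dist_zero_right]; exact hi2
    · rw [Metric.mem_ball, dist_zero_right]; exact not_lt.2 hi1
  refine le_trans (measure_mono hcov) (le_trans (measure_biUnion_finset_le _ _) ?_)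
  have hstep : ∀ i ∈ Finset.range N,
      ((volume : Measure M).prod (volume : Measure (EuclideanSpace ℝ (Fin l))))
        ((Metric.cthickening (srad l N t i) X) ×ˢ
          (Metric.closedBall (0 : EuclideanSpace ℝ (Fin l)) (rad l N t (i+1)) \
            Metric.ball 0 (rad l N t i)))
      ≤ c * ENNReal.ofReal (unitBallVol m * srad l N t i ^ m * (unitBallVol l * (t ^ l / N))) := by
    intro i hi
    rw [Measure.prod_prod, vol_shell_co hl hN ht i]
    refine le_trans (mul_le_mul_of_nonneg_right (Hν (srad l N t i)
      (srad_pos ht hl hN i (Finset.mem_range.1 hi))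
      (lt_of_le_of_lt (srad_le ht hl hN i) htδ)) zero_le) ?_
    rw [mul_assoc, ← ENNReal.ofReal_mul
      (mul_nonneg (unitBallVol_pos m).le (pow_nonneg (srad_nonneg ht hl hN i) m))]
  refine le_trans (Finset.sum_le_sum hstep) ?_
  rw [← Finset.mul_sum, ← ENNReal.ofReal_sum_of_nonneg (fun i _ =>
    mul_nonneg (mul_nonneg (unitBallVol_pos m).le (pow_nonneg (srad_nonneg ht hl hN i) m))
      (mul_nonneg (unitBallVol_pos l).le (by positivity)))]
  exact mul_le_mul_of_nonneg_left (ENNReal.ofReal_le_ofReal (riemann_upper hl hN ht)) zero_le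

lemma main_lower_est (hl : 1 ≤ l) {c : ENNReal} (hc : c ≠ ⊤) (ht : 0 < t) (htδ : t < δ)
    (Hν : ∀ u : ℝ, 0 < u → u < δ →
      c * ENNReal.ofReal (unitBallVol m * u ^ m) ≤ volume (Metric.cthickening u X)) :
    c * ENNReal.ofReal (unitBallVol (m + l) * t ^ (m + l))
      ≤ ((volume : Measure M).prod (volume : Measure (EuclideanSpace ℝ (Fin l))))
          {p : M × EuclideanSpace ℝ (Fin l) |
            Metric.infDist p.1 X ^ 2 + ‖p.2‖ ^ 2 ≤ t ^ 2} := by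
  set K := unitBallVol (m + l) * t ^ (m + l) with hK
  set Cst := unitBallVol m * unitBallVol l * t ^ (m + l) with hCst
  have hlim : Tendsto (fun N : ℕ => c * ENNReal.ofReal (K - 2 * Cst / N)) atTop
      (nhds (c * ENNReal.ofReal K)) := by
    apply ENNReal.Tendsto.const_mul _ (Or.inr hc)
    apply (ENNReal.continuous_ofReal.tendsto K).comp
    have := tendsto_const_nhds (x := K) (f := atTop (α := ℕ)) |>.sub
      (tendsto_const_div_atTop_nhds_zero_nat (2 * Cst))
    simpa using this
  refine le_of_tendsto hlim ?_
  filter_upwards [eventually_ge_atTop 1] with N hN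
  set shell : ℕ → Set (EuclideanSpace ℝ (Fin l)) := fun i =>
    Metric.closedBall (0 : EuclideanSpace ℝ (Fin l)) (rad l N t (i+1)) \
      Metric.closedBall 0 (rad l N t i) with hshell
  set R : ℕ → Set (M × EuclideanSpace ℝ (Fin l)) := fun i => Set.univ ×ˢ shell i with hR
  have hRmeas : ∀ i, MeasurableSet (R i) :=
    fun i => MeasurableSet.univ.prod (measurableSet_closedBall.diff measurableSet_closedBall)
  have hRdisj : Pairwise (Function.onFun Disjoint R) := by
    intro i j hij
    have hsh := shellP_disjoint hl hN ht hij
    rw [Function.onFun, Set.disjoint_left] at hsh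
    rw [Function.onFun, Set.disjoint_left]
    rintro p ⟨-, hp2⟩ ⟨-, hq2⟩
    exact hsh hp2 hq2
  have hsuper := sum_measure_inter_le
    ((volume : Measure M).prod (volume : Measure (EuclideanSpace ℝ (Fin l))))
    R hRmeas hRdisj (N - 1)
    {p : M × EuclideanSpace ℝ (Fin l) | Metric.infDist p.1 X ^ 2 + ‖p.2‖ ^ 2 ≤ t ^ 2}
  have hstep : ∀ i ∈ Finset.range (N - 1),
      c * ENNReal.ofReal (unitBallVol m * srad l N t (i+1) ^ m * (unitBallVol l * (t ^ l / N)))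
      ≤ ((volume : Measure M).prod (volume : Measure (EuclideanSpace ℝ (Fin l))))
          ({p : M × EuclideanSpace ℝ (Fin l) |
            Metric.infDist p.1 X ^ 2 + ‖p.2‖ ^ 2 ≤ t ^ 2} ∩ R i) := by
    intro i hi
    have hiN : i + 1 < N := by have := Finset.mem_range.1 hi; omega
    have hsub : (Metric.cthickening (srad l N t (i+1)) X) ×ˢ shell i ⊆
        {p : M × EuclideanSpace ℝ (Fin l) |
          Metric.infDist p.1 X ^ 2 + ‖p.2‖ ^ 2 ≤ t ^ 2} ∩ R i := by
      rintro ⟨x, y⟩ ⟨hx, hy⟩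
      have hxd : Metric.infDist x X ≤ srad l N t (i+1) :=
        (mem_cthick_iff hXne (srad_nonneg ht hl hN (i+1)) x).1 hx
      have hyd : ‖y‖ ≤ rad l N t (i+1) := by
        have := hy.1
        rwa [Metric.mem_closedBall, dist_zero_right] at this
      constructor
      · simp only [Set.mem_setOf_eq]
        have e1 : srad l N t (i+1) ^ 2 = t ^ 2 - rad l N t (i+1) ^ 2 :=
          srad_sq ht hl hN (i+1) hiN.le
        nlinarith [sq_le_of_le Metric.infDist_nonneg hxd, sq_le_of_le (norm_nonneg y) hyd,
          Metric.infDist_nonneg (x := x) (s := X)]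
      · exact ⟨Set.mem_univ x, hy⟩
    refine le_trans ?_ (measure_mono hsub)
    rw [Measure.prod_prod]
    have hvol : volume (shell i) = ENNReal.ofReal (unitBallVol l * (t ^ l / N)) :=
      vol_shell_cc hl hN ht i
    rw [hvol]
    refine le_trans (le_of_eq ?_) (mul_le_mul_of_nonneg_right (Hν (srad l N t (i+1))
      (srad_pos ht hl hN (i+1) hiN) (lt_of_le_of_lt (srad_le ht hl hN (i+1)) htδ)) zero_le)
    rw [mul_assoc c, ← ENNReal.ofReal_mul
      (mul_nonneg (unitBallVol_pos m).le (pow_nonneg (srad_nonneg ht hl hN (i+1)) m))]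
  refine le_trans ?_ (le_trans (Finset.sum_le_sum hstep) hsuper)
  rw [← Finset.mul_sum, ← ENNReal.ofReal_sum_of_nonneg (fun i _ =>
    mul_nonneg (mul_nonneg (unitBallVol_pos m).le (pow_nonneg (srad_nonneg ht hl hN (i+1)) m))
      (mul_nonneg (unitBallVol_pos l).le (by positivity)))]
  exact mul_le_mul_of_nonneg_left (ENNReal.ofReal_le_ofReal (riemann_lower hl hN ht)) zero_le

end mainest

/-- for a bounded subset `X` of an `n`-dimensional complete (Riemannian)
metric measure space `M`, identifying `X` with `X × {0}` in the `L²`-product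
`M × ℝ^ℓ` with the product volume, the upper Minkowski `k`-content does not increase
and the lower Minkowski `k`-content does not decrease when passing to the product. -/
theorem stmt_11 (M : Type*) [MetricSpace M] [CompleteSpace M] [MeasureSpace M]
    [SigmaFinite (volume : Measure M)]
    (n k l : ℕ) (hkn : k ≤ n) (hl : 1 ≤ l)
    (X : Set M) (hX : Bornology.IsBounded X) (hXne : X.Nonempty) :
    upperMinkOf
        (fun t =>
          ((volume : Measure M).prod (volume : Measure (EuclideanSpace ℝ (Fin l))))
            ((WithLp.equiv 2 (M × EuclideanSpace ℝ (Fin l))) ''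
              Metric.cthickening t
                ((WithLp.equiv 2 (M × EuclideanSpace ℝ (Fin l))).symm '' (X ×ˢ {0}))))
        (n + l - k) ≤
      upperMinkOf (fun t => volume (Metric.cthickening t X)) (n - k) ∧
    lowerMinkOf (fun t => volume (Metric.cthickening t X)) (n - k) ≤
      lowerMinkOf
        (fun t =>
          ((volume : Measure M).prod (volume : Measure (EuclideanSpace ℝ (Fin l))))
            ((WithLp.equiv 2 (M × EuclideanSpace ℝ (Fin l))) ''
              Metric.cthickening t
                ((WithLp.equiv 2 (M × EuclideanSpace ℝ (Fin l))).symm '' (X ×ˢ {0}))))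
        (n + l - k) := by
  have hnk : n + l - k = (n - k) + l := by omega
  rw [hnk]
  set m := n - k with hm
  constructor
  · -- upper
    refine le_of_forall_gt_imp_ge_of_dense fun c hc => ?_
    rcases eq_top_or_lt_top c with rfl | hctop
    · exact le_top
    have hc' : c ≠ ⊤ := hctop.ne
    have hev : ∀ᶠ u in nhdsWithin 0 (Set.Ioi (0:ℝ)),
        volume (Metric.cthickening u X) / ENNReal.ofReal (unitBallVol m * u ^ m) < c := by
      exact eventually_lt_of_limsup_lt (by simpa only [upperMinkOf] using hc)
        (by isBoundedDefault)
    obtain ⟨δ, hδ0, hδ⟩ := mem_nhdsGT_iff_exists_Ioo_subset.1 hev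
    rw [Set.mem_Ioi] at hδ0
    have Hν : ∀ u : ℝ, 0 < u → u < δ →
        volume (Metric.cthickening u X) ≤ c * ENNReal.ofReal (unitBallVol m * u ^ m) := by
      intro u hu huδ
      have h1 : volume (Metric.cthickening u X) /
          ENNReal.ofReal (unitBallVol m * u ^ m) < c := hδ ⟨hu, huδ⟩
      have hD0 : ENNReal.ofReal (unitBallVol m * u ^ m) ≠ 0 := by
        rw [Ne, ENNReal.ofReal_eq_zero, not_le]
        exact mul_pos (unitBallVol_pos m) (pow_pos hu m)
      exact (ENNReal.div_le_iff hD0 ENNReal.ofReal_ne_top).1 h1.le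
    simp only [upperMinkOf]
    refine limsup_le_of_le (by isBoundedDefault) ?_
    filter_upwards [Ioo_mem_nhdsGT_of_mem (Set.left_mem_Ico.2 hδ0)] with t htm
    have ht0 : 0 < t := htm.1
    rw [image_cthickening_eq hXne ht0.le]
    have hD0 : ENNReal.ofReal (unitBallVol (m + l) * t ^ (m + l)) ≠ 0 := by
      rw [Ne, ENNReal.ofReal_eq_zero, not_le]
      exact mul_pos (unitBallVol_pos (m + l)) (pow_pos ht0 (m + l))
    rw [ENNReal.div_le_iff hD0 ENNReal.ofReal_ne_top]
    exact main_upper_est hXne hl hc' ht0 htm.2 Hν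
  · -- lower
    refine le_of_forall_lt_imp_le_of_dense fun c hc => ?_
    have hc' : c ≠ ⊤ := (hc.trans_le le_top).ne
    have hev : ∀ᶠ u in nhdsWithin 0 (Set.Ioi (0:ℝ)),
        c < volume (Metric.cthickening u X) / ENNReal.ofReal (unitBallVol m * u ^ m) := by
      exact eventually_lt_of_lt_liminf (by simpa only [lowerMinkOf] using hc)
        (by isBoundedDefault)
    obtain ⟨δ, hδ0, hδ⟩ := mem_nhdsGT_iff_exists_Ioo_subset.1 hev
    rw [Set.mem_Ioi] at hδ0
    have Hν : ∀ u : ℝ, 0 < u → u < δ →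
        c * ENNReal.ofReal (unitBallVol m * u ^ m) ≤ volume (Metric.cthickening u X) := by
      intro u hu huδ
      have h1 : c < volume (Metric.cthickening u X) /
          ENNReal.ofReal (unitBallVol m * u ^ m) := hδ ⟨hu, huδ⟩
      have hD0 : ENNReal.ofReal (unitBallVol m * u ^ m) ≠ 0 := by
        rw [Ne, ENNReal.ofReal_eq_zero, not_le]
        exact mul_pos (unitBallVol_pos m) (pow_pos hu m)
      exact ((ENNReal.lt_div_iff_mul_lt (Or.inl hD0)
        (Or.inl ENNReal.ofReal_ne_top)).1 h1).le
    simp only [lowerMinkOf]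
    refine le_liminf_of_le (by isBoundedDefault) ?_
    filter_upwards [Ioo_mem_nhdsGT_of_mem (Set.left_mem_Ico.2 hδ0)] with t htm
    have ht0 : 0 < t := htm.1
    rw [image_cthickening_eq hXne ht0.le]
    have hD0 : ENNReal.ofReal (unitBallVol (m + l) * t ^ (m + l)) ≠ 0 := by
      rw [Ne, ENNReal.ofReal_eq_zero, not_le]
      exact mul_pos (unitBallVol_pos (m + l)) (pow_pos ht0 (m + l))
    rw [ENNReal.le_div_iff_mul_le (Or.inl hD0) (Or.inl ENNReal.ofReal_ne_top)]
    exact main_lower_est hXne hl hc' ht0 htm.2 Hν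
end

section
/- Let f : (−1,1)ⁿ → ℝ be given by f(x₁,…,xₙ) = max{x₁,…,xₙ}. Then for n ≥ 3 and small t > 0, the volume of the t-neighborhood (in the ℓ∞ norm) of the fiber f⁻¹(0) intersected with (−1,1)ⁿ is 2nt + o(t) as t → 0⁺, which is strictly less than t·2ⁿ for small t. -/
open MeasureTheory Filter
open scoped Topology

lemma argmax_sup {n : ℕ} [Nonempty (Fin n)] (y : Fin n → ℝ) :
    ∃ i, (∀ j, y j ≤ y i) ∧ y i = ⨆ j, y j := by
  obtain ⟨i, hi⟩ := Finite.exists_max y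
  exact ⟨i, hi, le_antisymm (le_ciSup (Finite.bddAbove_range y) i) (ciSup_le hi)⟩

lemma thick_mem {n : ℕ} [Nonempty (Fin n)] {t : ℝ} (ht : 0 < t) (y : Fin n → ℝ)
    (hy : ∀ i, y i ∈ Set.Ioo (-1 : ℝ) 1) :
    y ∈ Metric.thickening t
      {x : Fin n → ℝ | (∀ i, x i ∈ Set.Ioo (-1 : ℝ) 1) ∧ (⨆ i, x i) = 0} ↔
    |⨆ i, y i| < t := by
  rw [Metric.mem_thickening_iff]
  constructor
  · rintro ⟨z, ⟨hz1, hz2⟩, hdist⟩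
    obtain ⟨iy, hiy, hiy'⟩ := argmax_sup y
    obtain ⟨iz, hiz, hiz'⟩ := argmax_sup z
    have h1 : (⨆ i, y i) - (⨆ i, z i) ≤ dist y z := by
      rw [← hiy']
      have d := dist_le_pi_dist y z iy
      rw [Real.dist_eq] at d
      have hle : z iy ≤ ⨆ i, z i := hiz iy |>.trans_eq hiz'
      have h := le_abs_self (y iy - z iy)
      linarith
    have h2 : (⨆ i, z i) - (⨆ i, y i) ≤ dist y z := by
      rw [← hiz']
      have d := dist_le_pi_dist y z iz
      rw [Real.dist_eq, abs_sub_comm] at d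
      have h := le_abs_self (z iz - y iz)
      have hle : y iz ≤ ⨆ i, y i := hiy iz |>.trans_eq hiy'
      linarith
    rw [hz2] at h1 h2
    calc |⨆ i, y i| ≤ dist y z := abs_le.mpr ⟨by linarith, by linarith⟩
    _ < t := hdist
  · intro habs
    obtain ⟨i, hi, hi'⟩ := argmax_sup y
    refine ⟨Function.update (fun j => min (y j) 0) i 0, ⟨?_, ?_⟩, ?_⟩
    · intro j
      rcases eq_or_ne j i with rfl | hj
      · simp
      · simp only [Function.update_of_ne hj]
        exact ⟨lt_min (hy j).1 (by norm_num), lt_of_le_of_lt (min_le_right _ _) one_pos⟩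
    · apply le_antisymm
      · apply ciSup_le
        intro j
        rcases eq_or_ne j i with rfl | hj
        · simp
        · simp [Function.update_of_ne hj]
      · have := le_ciSup (Finite.bddAbove_range (Function.update (fun j => min (y j) 0) i 0)) i
        simpa using this
    · rw [dist_pi_lt_iff ht]
      intro j
      rcases eq_or_ne j i with rfl | hj
      · simp only [Function.update_self, Real.dist_eq, sub_zero]
        rwa [hi'] at *
      · simp only [Function.update_of_ne hj, Real.dist_eq]
        rcases le_or_gt (y j) 0 with h | h
        · simp [min_eq_left h]; exact ht
        · rw [min_eq_right h.le, sub_zero, abs_of_pos h]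
          calc y j ≤ y i := hi j
          _ ≤ |y i| := le_abs_self _
          _ < t := by rwa [hi']

lemma thick_set_eq {n : ℕ} [Nonempty (Fin n)] {t : ℝ} (ht : 0 < t) (ht1 : t < 1) :
    Metric.thickening t
        {x : Fin n → ℝ | (∀ i, x i ∈ Set.Ioo (-1 : ℝ) 1) ∧ (⨆ i, x i) = 0} ∩
      {x : Fin n → ℝ | ∀ i, x i ∈ Set.Ioo (-1 : ℝ) 1} =
    Set.pi Set.univ (fun _ : Fin n => Set.Ioo (-1 : ℝ) t) \
      Set.pi Set.univ (fun _ : Fin n => Set.Ioc (-1 : ℝ) (-t)) := by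
  ext y
  simp only [Set.mem_inter_iff, Set.mem_setOf_eq, Set.mem_diff, Set.mem_pi, Set.mem_univ,
    forall_true_left]
  constructor
  · rintro ⟨hth, hy⟩
    rw [thick_mem ht y hy, abs_lt] at hth
    simp only [Set.mem_Ioo, Set.mem_Ioc]
    obtain ⟨i, hi, hi'⟩ := argmax_sup y
    constructor
    · intro j
      exact ⟨(hy j).1, lt_of_le_of_lt ((hi j).trans_eq hi') hth.2⟩
    · intro hall
      have := (hall i).2
      rw [← hi'] at hth
      linarith [hth.1]
  · rintro ⟨hA, hB⟩
    simp only [Set.mem_Ioo, Set.mem_Ioc] at hA hB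
    push_neg at hB
    have hy : ∀ i, y i ∈ Set.Ioo (-1 : ℝ) 1 := fun i =>
      ⟨(hA i).1, (hA i).2.trans ht1⟩
    refine ⟨?_, hy⟩
    rw [thick_mem ht y hy, abs_lt]
    obtain ⟨i, hi, hi'⟩ := argmax_sup y
    obtain ⟨j, hj⟩ := hB
    have hjt : -t < y j := hj (hA j).1
    constructor
    · linarith [hjt.trans_le ((hi j).trans_eq hi')]
    · rw [← hi']; exact (hA i).2

lemma vol_eq {n : ℕ} [Nonempty (Fin n)] {t : ℝ} (ht : 0 < t) (ht1 : t < 1) :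
    (volume (Metric.thickening t
        {x : Fin n → ℝ | (∀ i, x i ∈ Set.Ioo (-1 : ℝ) 1) ∧ (⨆ i, x i) = 0} ∩
      {x : Fin n → ℝ | ∀ i, x i ∈ Set.Ioo (-1 : ℝ) 1})).toReal
    = (1 + t) ^ n - (1 - t) ^ n := by
  rw [thick_set_eq ht ht1]
  have hsub : Set.pi Set.univ (fun _ : Fin n => Set.Ioc (-1 : ℝ) (-t)) ⊆
      Set.pi Set.univ (fun _ : Fin n => Set.Ioo (-1 : ℝ) t) := by
    intro y hy i hi
    have := hy i hi
    exact ⟨this.1, lt_of_le_of_lt this.2 (by linarith)⟩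
  have hmeas : MeasurableSet (Set.pi Set.univ (fun _ : Fin n => Set.Ioc (-1 : ℝ) (-t))) :=
    MeasurableSet.univ_pi fun _ => measurableSet_Ioc
  have hA : volume (Set.pi Set.univ (fun _ : Fin n => Set.Ioo (-1 : ℝ) t))
      = ENNReal.ofReal (1 + t) ^ n := by
    rw [volume_pi_pi]
    simp [Real.volume_Ioo]
    ring_nf
  have hBv : volume (Set.pi Set.univ (fun _ : Fin n => Set.Ioc (-1 : ℝ) (-t)))
      = ENNReal.ofReal (1 - t) ^ n := by
    rw [volume_pi_pi]
    simp [Real.volume_Ioc]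
    ring_nf
  have hfin : volume (Set.pi Set.univ (fun _ : Fin n => Set.Ioc (-1 : ℝ) (-t))) ≠ ⊤ := by
    rw [hBv]; exact ENNReal.pow_ne_top ENNReal.ofReal_ne_top
  rw [measure_diff hsub hmeas.nullMeasurableSet hfin, hA, hBv,
    ENNReal.toReal_sub_of_le (pow_le_pow_left₀ (by positivity)
      (ENNReal.ofReal_le_ofReal (by linarith)) n) (ENNReal.pow_ne_top ENNReal.ofReal_ne_top)]
  rw [ENNReal.toReal_pow, ENNReal.toReal_pow, ENNReal.toReal_ofReal (by linarith),
    ENNReal.toReal_ofReal (by linarith)]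

lemma nat_two_mul_lt (n : ℕ) (hn : 3 ≤ n) : 2 * n < 2 ^ n := by
  induction n with
  | zero => omega
  | succ k ih =>
    rcases Nat.lt_or_ge k 3 with h | h
    · have hk : k = 2 := by omega
      subst hk; norm_num
    · have h1 := ih h
      have h2 : 2 ^ (k + 1) = 2 * 2 ^ k := by ring
      omega

lemma littleo (n : ℕ) :
    (fun t : ℝ => (1 + t) ^ n - (1 - t) ^ n - 2 * n * t) =o[𝓝[>] (0 : ℝ)]
      (fun t => t) := by
  have h1 : HasDerivAt (fun t : ℝ => (1 + t) ^ n) (n * (1 + (0:ℝ)) ^ (n - 1) * 1) 0 :=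
    ((hasDerivAt_id (0:ℝ)).const_add 1).pow n
  have h2 : HasDerivAt (fun t : ℝ => (1 - t) ^ n) (n * (1 - (0:ℝ)) ^ (n - 1) * (-1)) 0 :=
    ((hasDerivAt_id (0:ℝ)).const_sub 1).pow n
  have h : HasDerivAt (fun t : ℝ => (1 + t) ^ n - (1 - t) ^ n) (2 * n) 0 := by
    have := h1.sub h2
    refine this.congr_deriv ?_
    simp; ring
  have H := (hasDerivAt_iff_isLittleO.mp h).mono (nhdsWithin_le_nhds (s := Set.Ioi (0:ℝ)))
  simp only [sub_zero, smul_eq_mul] at H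
  refine H.congr' ?_ (by rfl)
  filter_upwards with t
  norm_num
  ring

/-- for `f(x) = max{x₁,…,xₙ}` on the open cube `(−1,1)ⁿ` with the `ℓ∞`
norm, the volume of the `t`-neighborhood of the fiber `f⁻¹(0)` inside the cube is
`2nt + o(t)` as `t → 0⁺`, which is strictly less than `t·2ⁿ` for small `t` once `n ≥ 3`. -/
theorem stmt_13 (n : ℕ) (hn : 3 ≤ n) :
    (fun t : ℝ =>
        (volume (Metric.thickening t
            {x : Fin n → ℝ | (∀ i, x i ∈ Set.Ioo (-1 : ℝ) 1) ∧ (⨆ i, x i) = 0} ∩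
          {x : Fin n → ℝ | ∀ i, x i ∈ Set.Ioo (-1 : ℝ) 1})).toReal - 2 * n * t)
      =o[𝓝[>] (0 : ℝ)] (fun t => t) ∧
    ∀ᶠ t in 𝓝[>] (0 : ℝ),
      (volume (Metric.thickening t
          {x : Fin n → ℝ | (∀ i, x i ∈ Set.Ioo (-1 : ℝ) 1) ∧ (⨆ i, x i) = 0} ∩
        {x : Fin n → ℝ | ∀ i, x i ∈ Set.Ioo (-1 : ℝ) 1})).toReal < t * 2 ^ n := by
  have : Nonempty (Fin n) := Fin.pos_iff_nonempty.mp (by omega)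
  set V : ℝ → ℝ := fun t =>
    (volume (Metric.thickening t
        {x : Fin n → ℝ | (∀ i, x i ∈ Set.Ioo (-1 : ℝ) 1) ∧ (⨆ i, x i) = 0} ∩
      {x : Fin n → ℝ | ∀ i, x i ∈ Set.Ioo (-1 : ℝ) 1})).toReal with hV
  have hev : ∀ᶠ t in 𝓝[>] (0 : ℝ), V t = (1 + t) ^ n - (1 - t) ^ n := by
    filter_upwards [Ioo_mem_nhdsGT one_pos] with t ht
    exact vol_eq ht.1 ht.2
  have hlo : (fun t : ℝ => V t - 2 * n * t) =o[𝓝[>] (0 : ℝ)] (fun t => t) := by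
    refine Filter.EventuallyEq.trans_isLittleO ?_ (littleo n)
    filter_upwards [hev] with t ht
    rw [ht]
  refine ⟨hlo, ?_⟩
  have hcast : (2 : ℝ) * n < 2 ^ n := by
    exact_mod_cast nat_two_mul_lt n hn
  have hc : (0:ℝ) < (2 ^ n - 2 * n) / 2 := by linarith
  filter_upwards [hlo.def hc, self_mem_nhdsWithin] with t hb (htpos : 0 < t)
  rw [Real.norm_eq_abs, Real.norm_eq_abs, abs_of_pos htpos] at hb
  have := abs_le.mp hb
  nlinarith [this.1, this.2]
end
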